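/- Let I ⊆ (0,∞) be an open interval, g : I → ℝ continuously differentiable with 1 + r·g(r) > 0 for all r ∈ I, fix r₀ ∈ I and C ∈ ℝ. Define ϑ(r) = ∫_{r₀}^r g(s)·(1−s·g(s))/(1+s·g(s)) ds and m(r) = g(r)r²(1+g(r)r/2)/(1+r·g(r))² + (2r³·e^{2ϑ(r)}/(1+r·g(r))²)·(C + ∫_{r₀}^r g(s)²·e^{−2ϑ(s)}/(s(1+s·g(s))) ds). Then m is differentiable on I and satisfies the linear first-order ODE m′(r) = (r²/(1+g(r)r))·(g′(r)+g(r)²−g(r)/r) + (m(r)/(r(1+r·g(r))))·(3(1+g(r)r) − 2r²(g′(r)+g(r)²)) for all r ∈ I. -/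

import Mathlib

open Real Set


set_option maxHeartbeats 1000000 in
private lemma isotropic_key (r G G' E K : ℝ) (hr : r ≠ 0) (hD : 1 + r * G ≠ 0) (hE : E ≠ 0) :
    (r ^ 2 / (1 + G * r)) * (G' + G ^ 2 - G / r) +
      ((G * r ^ 2 * (1 + G * r / 2) / (1 + r * G) ^ 2 +
        2 * r ^ 3 * E / (1 + r * G) ^ 2 * K) / (r * (1 + r * G))) *
        (3 * (1 + G * r) - 2 * r ^ 2 * (G' + G ^ 2)) =
    (((G' * r ^ 2 + G * (2 * r ^ 1)) * (1 + G * r / 2) + G * r ^ 2 * ((G' * r + G * 1) / 2)) * (1 + r * G) ^ 2 -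
        G * r ^ 2 * (1 + G * r / 2) * (2 * (1 + r * G) ^ 1 * (1 * G + r * G'))) / ((1 + r * G) ^ 2) ^ 2 +
      (((2 * (3 * r ^ 2) * E + 2 * r ^ 3 * (E * (2 * (G * (1 - r * G) / (1 + r * G))))) * (1 + r * G) ^ 2 -
          2 * r ^ 3 * E * (2 * (1 + r * G) ^ 1 * (1 * G + r * G'))) / ((1 + r * G) ^ 2) ^ 2 * K +
        2 * r ^ 3 * E / (1 + r * G) ^ 2 * (G ^ 2 * E⁻¹ / (r * (1 + r * G)))) := by
  have h4 : r + r ^ 2 * G ≠ 0 := by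
    intro h; apply hD
    have h0 : r * (1 + r * G) = 0 := by linarith [h]
    rcases mul_eq_zero.1 h0 with h' | h'
    · exact absurd h' hr
    · exact h'
  have h5 : 1 + G * r ≠ 0 := by rwa [mul_comm]
  have h6 : (1 + G * r) * r ≠ 0 := mul_ne_zero h5 hr
  field_simp [h4, h5, h6]
  ring

set_option maxHeartbeats 1000000 in
theorem isotropic_mass_algorithm_solves_ODE
    (a b : ℝ) (ha : 0 ≤ a) (hab : a < b)
    (g g' : ℝ → ℝ)
    (hg : ∀ r ∈ Ioo a b, HasDerivAt g (g' r) r)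
    (hg' : ContinuousOn g' (Ioo a b))
    (hpos : ∀ r ∈ Ioo a b, 0 < 1 + r * g r)
    (r₀ : ℝ) (hr₀ : r₀ ∈ Ioo a b) (C : ℝ)
    (ϑ m : ℝ → ℝ)
    (hϑ : ∀ r, ϑ r = ∫ s in r₀..r, g s * (1 - s * g s) / (1 + s * g s))
    (hm : ∀ r, m r =
      g r * r ^ 2 * (1 + g r * r / 2) / (1 + r * g r) ^ 2 +
        (2 * r ^ 3 * Real.exp (2 * ϑ r) / (1 + r * g r) ^ 2) *
          (C + ∫ s in r₀..r, g s ^ 2 * Real.exp (-(2 * ϑ s)) / (s * (1 + s * g s)))) :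
    ∀ r ∈ Ioo a b,
      HasDerivAt m
        ((r ^ 2 / (1 + g r * r)) * (g' r + g r ^ 2 - g r / r) +
          (m r / (r * (1 + r * g r))) *
            (3 * (1 + g r * r) - 2 * r ^ 2 * (g' r + g r ^ 2))) r := by
  have hϑeq : ϑ = fun r => ∫ s in r₀..r, g s * (1 - s * g s) / (1 + s * g s) := funext hϑ
  subst hϑeq
  have hmeq : m = fun r =>
      g r * r ^ 2 * (1 + g r * r / 2) / (1 + r * g r) ^ 2 +
        (2 * r ^ 3 * Real.exp (2 * (∫ s in r₀..r, g s * (1 - s * g s) / (1 + s * g s))) / (1 + r * g r) ^ 2) *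
          (C + ∫ s in r₀..r, g s ^ 2 *
            Real.exp (-(2 * (∫ t in r₀..s, g t * (1 - t * g t) / (1 + t * g t)))) /
              (s * (1 + s * g s))) := funext hm
  subst hmeq
  have hopen : IsOpen (Ioo a b) := isOpen_Ioo
  have hgc : ContinuousOn g (Ioo a b) := fun x hx => (hg x hx).continuousAt.continuousWithinAt
  have hFTC : ∀ f : ℝ → ℝ, ContinuousOn f (Ioo a b) → ∀ x ∈ Ioo a b,
      HasDerivAt (fun u => ∫ s in r₀..u, f s) (f x) x := by
    intro f hf x hx
    have hsub : Set.uIcc r₀ x ⊆ Ioo a b := Set.ordConnected_Ioo.uIcc_subset hr₀ hx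
    exact intervalIntegral.integral_hasDerivAt_right
      ((hf.mono hsub).intervalIntegrable)
      (hf.stronglyMeasurableAtFilter hopen x hx)
      (hf.continuousAt (hopen.mem_nhds hx))
  -- continuity of first integrand
  have hf1c : ContinuousOn (fun s => g s * (1 - s * g s) / (1 + s * g s)) (Ioo a b) := by
    exact (hgc.mul (continuousOn_const.sub (continuousOn_id.mul hgc))).div
      (continuousOn_const.add (continuousOn_id.mul hgc)) (fun x hx => ne_of_gt (hpos x hx))
  have hϑd : ∀ x ∈ Ioo a b,
      HasDerivAt (fun u => ∫ s in r₀..u, g s * (1 - s * g s) / (1 + s * g s))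
        (g x * (1 - x * g x) / (1 + x * g x)) x := hFTC _ hf1c
  have hϑc : ContinuousOn (fun u => ∫ s in r₀..u, g s * (1 - s * g s) / (1 + s * g s))
      (Ioo a b) := fun x hx => (hϑd x hx).continuousAt.continuousWithinAt
  have hf2c : ContinuousOn (fun s => g s ^ 2 *
      Real.exp (-(2 * (∫ t in r₀..s, g t * (1 - t * g t) / (1 + t * g t)))) /
        (s * (1 + s * g s))) (Ioo a b) := by
    apply ContinuousOn.div
    · exact (hgc.pow 2).mul
        (Real.continuous_exp.comp_continuousOn ((continuousOn_const.mul hϑc).neg))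
    · exact continuousOn_id.mul (continuousOn_const.add (continuousOn_id.mul hgc))
    · intro x hx
      have hx0 : 0 < x := lt_of_le_of_lt ha hx.1
      exact ne_of_gt (mul_pos hx0 (hpos x hx))
  intro r hr
  have hr0 : 0 < r := lt_of_le_of_lt ha hr.1
  have hDpos : 0 < 1 + r * g r := hpos r hr
  have hDne : (1 + r * g r) ≠ 0 := ne_of_gt hDpos
  have hD2ne : ((1 + r * g r) ^ 2) ≠ 0 := pow_ne_zero 2 hDne
  have hgr : HasDerivAt g (g' r) r := hg r hr
  have hD : HasDerivAt (fun x => 1 + x * g x) (1 * g r + r * g' r) r :=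
    ((hasDerivAt_id r).mul hgr).const_add 1
  have hD2 : HasDerivAt (fun x => (1 + x * g x) ^ 2)
      ((2 : ℕ) * (1 + r * g r) ^ 1 * (1 * g r + r * g' r)) r := by
    simpa using hD.fun_pow 2
  have hnum1 : HasDerivAt (fun x => g x * x ^ 2 * (1 + g x * x / 2))
      ((g' r * r ^ 2 + g r * ((2 : ℕ) * r ^ 1)) * (1 + g r * r / 2) +
        g r * r ^ 2 * ((g' r * r + g r * 1) / 2)) r := by
    exact (hgr.mul (hasDerivAt_pow 2 r)).mul
      (((hgr.mul (hasDerivAt_id r)).div_const 2).const_add 1)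
  have hterm1 : HasDerivAt (fun x => g x * x ^ 2 * (1 + g x * x / 2) / (1 + x * g x) ^ 2)
      ((((g' r * r ^ 2 + g r * ((2 : ℕ) * r ^ 1)) * (1 + g r * r / 2) +
        g r * r ^ 2 * ((g' r * r + g r * 1) / 2)) * (1 + r * g r) ^ 2 -
        g r * r ^ 2 * (1 + g r * r / 2) * ((2 : ℕ) * (1 + r * g r) ^ 1 * (1 * g r + r * g' r))) /
        ((1 + r * g r) ^ 2) ^ 2) r := hnum1.div hD2 hD2ne
  set ϑ' : ℝ := g r * (1 - r * g r) / (1 + r * g r) with hϑ'def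
  have hexp : HasDerivAt
      (fun x => Real.exp (2 * (∫ s in r₀..x, g s * (1 - s * g s) / (1 + s * g s))))
      (Real.exp (2 * (∫ s in r₀..r, g s * (1 - s * g s) / (1 + s * g s))) * (2 * ϑ')) r :=
    (((hϑd r hr).const_mul 2)).exp
  have hnum2 : HasDerivAt
      (fun x => 2 * x ^ 3 *
        Real.exp (2 * (∫ s in r₀..x, g s * (1 - s * g s) / (1 + s * g s))))
      ((2 * ((3 : ℕ) * r ^ 2)) *
        Real.exp (2 * (∫ s in r₀..r, g s * (1 - s * g s) / (1 + s * g s))) +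
        2 * r ^ 3 *
        (Real.exp (2 * (∫ s in r₀..r, g s * (1 - s * g s) / (1 + s * g s))) * (2 * ϑ'))) r :=
    ((hasDerivAt_pow 3 r).const_mul 2).mul hexp
  have hA : HasDerivAt
      (fun x => 2 * x ^ 3 *
        Real.exp (2 * (∫ s in r₀..x, g s * (1 - s * g s) / (1 + s * g s))) / (1 + x * g x) ^ 2)
      ((((2 * ((3 : ℕ) * r ^ 2)) *
        Real.exp (2 * (∫ s in r₀..r, g s * (1 - s * g s) / (1 + s * g s))) +
        2 * r ^ 3 *
        (Real.exp (2 * (∫ s in r₀..r, g s * (1 - s * g s) / (1 + s * g s))) * (2 * ϑ'))) *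
        (1 + r * g r) ^ 2 -
        2 * r ^ 3 * Real.exp (2 * (∫ s in r₀..r, g s * (1 - s * g s) / (1 + s * g s))) *
        ((2 : ℕ) * (1 + r * g r) ^ 1 * (1 * g r + r * g' r))) / ((1 + r * g r) ^ 2) ^ 2) r :=
    hnum2.div hD2 hD2ne
  have hB : HasDerivAt
      (fun x => C + ∫ s in r₀..x, g s ^ 2 *
        Real.exp (-(2 * (∫ t in r₀..s, g t * (1 - t * g t) / (1 + t * g t)))) /
          (s * (1 + s * g s)))
      (g r ^ 2 *
        Real.exp (-(2 * (∫ t in r₀..r, g t * (1 - t * g t) / (1 + t * g t)))) /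
          (r * (1 + r * g r))) r := (hFTC _ hf2c r hr).const_add C
  have hfull := hterm1.fun_add (hA.fun_mul hB)
  convert hfull using 1
  case e'_4 => rfl
  case e'_5 => rfl
  beta_reduce
  set E : ℝ := Real.exp (2 * (∫ s in r₀..r, g s * (1 - s * g s) / (1 + s * g s))) with hE
  have hEexp : Real.exp (-(2 * (∫ t in r₀..r, g t * (1 - t * g t) / (1 + t * g t)))) = E⁻¹ := by
    rw [hE, ← Real.exp_neg]
  set K : ℝ := C + ∫ s in r₀..r, g s ^ 2 *
      Real.exp (-(2 * (∫ t in r₀..s, g t * (1 - t * g t) / (1 + t * g t)))) /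
        (s * (1 + s * g s)) with hK
  have hEpos : 0 < E := Real.exp_pos _
  have hEne : E ≠ 0 := ne_of_gt hEpos
  rw [hEexp, hϑ'def]
  have hrne : r ≠ 0 := ne_of_gt hr0
  push_cast
  linear_combination isotropic_key r (g r) (g' r) E K hrne hDne hEne
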